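/- arXiv:1409.0125 — 2 statements merged into one kernel-verified Lean document; each statement's English description precedes it below -/
import Mathlib

section
/- Let P be a minimal pattern group of depth d with m = |St_P(d-1)|. Then for every n > d, the order of the restriction of G_P to X^[n] is |G_P|_{X^[n]}| = |P| · m^{|X| + |X|^2 + ... + |X|^{n-d}}. -/
open List

/-- The group of automorphisms of the rooted tree `X*` (vertices = words over `X`,
root = empty word, edges `(v, vx)`), as a subgroup of the permutations of `List X`. -/
def treeAut (X : Type*) : Subgroup (Equiv.Perm (List X)) where
  carrier := {f | f [] = [] ∧ ∀ (v : List X) (x : X), ∃ y : X, f (v ++ [x]) = f v ++ [y]}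
  one_mem' := ⟨rfl, fun _ x => ⟨x, rfl⟩⟩
  mul_mem' := by
    rintro f g ⟨hf0, hf⟩ ⟨hg0, hg⟩
    refine ⟨by simp [Equiv.Perm.mul_apply, hg0, hf0], fun v x => ?_⟩
    obtain ⟨y, hy⟩ := hg v x
    obtain ⟨z, hz⟩ := hf (g v) y
    exact ⟨z, by simp [Equiv.Perm.mul_apply, hy, hz]⟩
  inv_mem' := by
    rintro f ⟨hf0, hf⟩
    have h0 : f⁻¹ [] = ([] : List _) := by
      have h : f⁻¹ (f []) = [] := by simp
      rwa [hf0] at h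
    refine ⟨h0, fun v x => ?_⟩
    rcases List.eq_nil_or_concat (f⁻¹ (v ++ [x])) with h | ⟨w, z, hw⟩
    · exfalso
      have h1 : v ++ [x] = f ([] : List _) := by
        have := congrArg (fun t => f t) h
        simpa using this
      rw [hf0] at h1
      simp at h1
    · rw [List.concat_eq_append] at hw
      obtain ⟨y, hy⟩ := hf w z
      have h2 : f w ++ [y] = v ++ [x] := by
        rw [← hy]
        have := congrArg (fun t => f t) hw
        simpa using this.symm
      have h3 := (List.append_inj' h2 rfl).1
      have h4 : w = f⁻¹ v := by rw [← h3]; simp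
      exact ⟨z, by rw [hw, h4]⟩

theorem treeAut.length_apply {X : Type*} {f : Equiv.Perm (List X)} (hf : f ∈ treeAut X)
    (v : List X) : (f v).length = v.length := by
  induction v using List.reverseRecOn with
  | nil => simp [hf.1]
  | append_singleton v x ih =>
      obtain ⟨y, hy⟩ := hf.2 v x
      simp [hy, ih]

/-- The section function: `sectFun f v w` is the word `u` with `f (v ++ w) = f v ++ u`. -/
def sectFun {X : Type*} (f : Equiv.Perm (List X)) (v w : List X) : List X :=
  (f (v ++ w)).drop v.length

theorem treeAut.apply_append {X : Type*} {f : Equiv.Perm (List X)} (hf : f ∈ treeAut X)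
    (v w : List X) : f (v ++ w) = f v ++ sectFun f v w := by
  have hpre : f v <+: f (v ++ w) := by
    induction w using List.reverseRecOn with
    | nil => simp
    | append_singleton w x ih =>
        obtain ⟨y, hy⟩ := hf.2 (v ++ w) x
        rw [← List.append_assoc, hy]
        exact ih.trans (List.prefix_append _ _)
  obtain ⟨t, ht⟩ := hpre
  have hd : sectFun f v w = t := by
    simp only [sectFun]
    rw [← ht, ← treeAut.length_apply hf v, List.drop_left]
  rw [hd, ht]

/-- The section of a tree automorphism `g` at a vertex `v`, as a tree automorphism. -/
def sect {X : Type*} (g : ↥(treeAut X)) (v : List X) : ↥(treeAut X) := by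
  refine ⟨{ toFun := sectFun (g : Equiv.Perm (List X)) v
            invFun := sectFun ((g : Equiv.Perm (List X))⁻¹) ((g : Equiv.Perm (List X)) v)
            left_inv := ?_
            right_inv := ?_ }, ?_, ?_⟩
  · intro w
    show sectFun _ _ (sectFun _ _ _) = w
    have ha := treeAut.apply_append g.2 v w
    simp only [sectFun] at ha ⊢
    rw [← ha, Equiv.Perm.coe_inv, Equiv.symm_apply_apply, treeAut.length_apply g.2, List.drop_left]
  · intro w
    have hginv : (g : Equiv.Perm (List X))⁻¹ ∈ treeAut X := (treeAut X).inv_mem g.2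
    show sectFun _ _ (sectFun _ _ _) = w
    have key : (v : List X) ++ sectFun ((g : Equiv.Perm (List X))⁻¹) ((g : Equiv.Perm (List X)) v) w
        = (g : Equiv.Perm (List X))⁻¹ ((g : Equiv.Perm (List X)) v ++ w) := by
      have h1 := treeAut.apply_append hginv ((g : Equiv.Perm (List X)) v) w
      have h2 : (g : Equiv.Perm (List X))⁻¹ ((g : Equiv.Perm (List X)) v) = v := by simp
      rw [h1, h2]
    simp only [sectFun]
    simp only [sectFun] at key
    rw [key]
    simp [treeAut.length_apply g.2]
  · show sectFun _ _ [] = []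
    simp only [sectFun, List.append_nil]
    exact List.drop_eq_nil_of_le (le_of_eq (treeAut.length_apply g.2 v))
  · intro w x
    show ∃ y, sectFun _ _ (w ++ [x]) = sectFun _ _ w ++ [y]
    obtain ⟨y, hy⟩ := g.2.2 (v ++ w) x
    refine ⟨y, ?_⟩
    simp only [sectFun]
    rw [← List.append_assoc, hy, List.drop_append_of_le_length]
    rw [treeAut.length_apply g.2]
    simp

theorem sect_apply {X : Type*} (g : ↥(treeAut X)) (v w : List X) :
    ((sect g v : ↥(treeAut X)) : Equiv.Perm (List X)) w
      = sectFun (g : Equiv.Perm (List X)) v w := rfl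

theorem sect_nil {X : Type*} (g : ↥(treeAut X)) : sect g [] = g := by
  apply Subtype.ext
  apply Equiv.ext
  intro w
  rw [sect_apply]
  simp [sectFun]

theorem sect_append {X : Type*} (g : ↥(treeAut X)) (v u : List X) :
    sect g (v ++ u) = sect (sect g v) u := by
  apply Subtype.ext
  apply Equiv.ext
  intro w
  show sectFun (g : Equiv.Perm (List X)) (v ++ u) w
    = sectFun ((sect g v : ↥(treeAut X)) : Equiv.Perm (List X)) u w
  simp only [sectFun, sect_apply]
  rw [List.append_assoc, List.drop_drop, List.length_append, Nat.add_comm]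

theorem sect_one {X : Type*} (v : List X) : sect (1 : ↥(treeAut X)) v = 1 := by
  apply Subtype.ext
  apply Equiv.ext
  intro w
  rw [sect_apply]
  simp [sectFun]

theorem sect_mul {X : Type*} (g h : ↥(treeAut X)) (v : List X) :
    sect (g * h) v = sect g ((h : Equiv.Perm (List X)) v) * sect h v := by
  apply Subtype.ext
  apply Equiv.ext
  intro w
  show (((g * h : ↥(treeAut X)) : Equiv.Perm (List X)) (v ++ w)).drop v.length
      = ((g : Equiv.Perm (List X)) ((h : Equiv.Perm (List X)) v
          ++ sectFun (h : Equiv.Perm (List X)) v w)).drop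
            ((h : Equiv.Perm (List X)) v).length
  have hcoe : ((g * h : ↥(treeAut X)) : Equiv.Perm (List X)) (v ++ w)
      = (g : Equiv.Perm (List X)) ((h : Equiv.Perm (List X)) (v ++ w)) := rfl
  have hh := treeAut.apply_append h.2 v w
  rw [hcoe, hh, treeAut.length_apply h.2]

theorem sect_inv {X : Type*} (g : ↥(treeAut X)) (v : List X) :
    sect g⁻¹ v = (sect g (((g : Equiv.Perm (List X))⁻¹) v))⁻¹ := by
  have h1 : sect (g * g⁻¹) v = 1 := by rw [mul_inv_cancel, sect_one]
  have h2 := (sect_mul g g⁻¹ v).symm.trans h1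
  exact eq_inv_of_mul_eq_one_right h2

/-- The automorphism group of the finite subtree `X^[d]` of words of length at most `d`
is modelled inside the permutations of the set of such words. -/
abbrev Pat (X : Type*) (d : ℕ) := Equiv.Perm {l : List X // l.length ≤ d}

/-- The restriction homomorphism `Aut X* → Sym(X^[d])`. -/
def restr (X : Type*) (d : ℕ) : ↥(treeAut X) →* Pat X d where
  toFun g :=
    { toFun := fun w => ⟨(g : Equiv.Perm (List X)) w.1,
        by rw [treeAut.length_apply g.2]; exact w.2⟩
      invFun := fun w => ⟨(g : Equiv.Perm (List X))⁻¹ w.1,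
        by rw [treeAut.length_apply ((treeAut X).inv_mem g.2)]; exact w.2⟩
      left_inv := fun w => by
        apply Subtype.ext
        simp
      right_inv := fun w => by
        apply Subtype.ext
        simp }
  map_one' := by
    apply Equiv.ext
    intro w
    rfl
  map_mul' := fun g h => by
    apply Equiv.ext
    intro w
    rfl

/-- `Aut X^[d]`: the automorphism group of the finite tree `X^[d]`, realized as the
image of `Aut X*` under restriction (every automorphism of the finite tree extends). -/
def finAut (X : Type*) (d : ℕ) : Subgroup (Pat X d) := (restr X d).range

/-- The `n`-th level stabilizer in `Aut X*`: automorphisms fixing all words of length `≤ n`. -/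
def levelStab (X : Type*) (n : ℕ) : Subgroup ↥(treeAut X) := (restr X n).ker

/-- The self-similar group of finite type `G_P` given by a pattern group `P ≤ Aut X^[d]`:
all tree automorphisms all of whose sections restrict to elements of `P` on `X^[d]`. -/
def GP (X : Type*) (d : ℕ) (P : Subgroup (Pat X d)) : Subgroup ↥(treeAut X) where
  carrier := {g | ∀ v : List X, restr X d (sect g v) ∈ P}
  one_mem' := fun v => by rw [sect_one, map_one]; exact P.one_mem
  mul_mem' := fun {a b} ha hb v => by
    rw [sect_mul, map_mul]; exact P.mul_mem (ha _) (hb v)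
  inv_mem' := fun {a} ha v => by
    rw [sect_inv, map_inv]; exact P.inv_mem (ha _)

theorem mem_GP {X : Type*} {d : ℕ} {P : Subgroup (Pat X d)} (g : ↥(treeAut X)) :
    g ∈ GP X d P ↔ ∀ v : List X, restr X d (sect g v) ∈ P := Iff.rfl

/-- The edge relation `a →^x b` of the pattern graph `Γ_P`: the section of the pattern `a`
at the letter `x` agrees with the pattern `b` on `X^[d-1]`. -/
def patEdge (X : Type*) (d : ℕ) (a : Pat X d) (x : X) (b : Pat X d) : Prop :=
  ∀ (w : List X) (hw : w.length ≤ d - 1) (hw' : (x :: w).length ≤ d),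
    ((a ⟨x :: w, hw'⟩ : {l : List X // l.length ≤ d}) : List X).tail
      = ((b ⟨w, le_trans hw (Nat.sub_le d 1)⟩ : {l : List X // l.length ≤ d}) : List X)

/-- The subgroup of `Sym(X^[d])` of elements fixing all words of length at most `k`. -/
def patLevelStab (X : Type*) (d k : ℕ) : Subgroup (Pat X d) where
  carrier := {a | ∀ (w : List X) (hw : w.length ≤ d), w.length ≤ k → a ⟨w, hw⟩ = ⟨w, hw⟩}
  one_mem' := fun _ _ _ => rfl
  mul_mem' := fun {a b} ha hb w hw hk => by
    have h1 := hb w hw hk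
    have h2 := ha w hw hk
    show a (b ⟨w, hw⟩) = ⟨w, hw⟩
    rw [h1, h2]
  inv_mem' := fun {a} ha w hw hk => by
    have h1 := ha w hw hk
    have h2 : a⁻¹ (a ⟨w, hw⟩) = ⟨w, hw⟩ := by simp
    rwa [h1] at h2

/-- Level-transitivity: the group acts transitively on every level `X^n` of the tree. -/
def LevelTrans {X : Type*} (G : Subgroup ↥(treeAut X)) : Prop :=
  ∀ u v : List X, u.length = v.length → ∃ g ∈ G, (g : Equiv.Perm (List X)) u = v

/-- Topological finite generation of a closed subgroup `G ≤ Aut X*`, expressed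
concretely: some finite subset of `G` generates a subgroup which is dense in `G`
for the profinite (congruence) topology of `Aut X*`. -/
def TopFG {X : Type*} (G : Subgroup ↥(treeAut X)) : Prop :=
  ∃ S : Finset ↥(treeAut X), (S : Set ↥(treeAut X)) ⊆ (G : Set ↥(treeAut X)) ∧
    ∀ g ∈ G, ∀ n : ℕ, ∃ h ∈ Subgroup.closure (S : Set ↥(treeAut X)),
      ∀ w : List X, w.length ≤ n →
        (h : Equiv.Perm (List X)) w = (g : Equiv.Perm (List X)) w


section AuxStatement9

variable {X : Type*}

instance finiteWordsLe (n : ℕ) [Finite X] : Finite {l : List X // l.length ≤ n} :=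
  (List.finite_length_le X n).to_subtype

instance finiteWordsEq (n : ℕ) [Finite X] : Finite {l : List X // l.length = n} :=
  (List.finite_length_eq X n).to_subtype

theorem apply_eq_of_restr_eq {n : ℕ} {g g' : ↥(treeAut X)}
    (h : restr X n g = restr X n g') {w : List X} (hw : w.length ≤ n) :
    (g : Equiv.Perm (List X)) w = (g' : Equiv.Perm (List X)) w :=
  congrArg (fun a => ((a ⟨w, hw⟩ : {l : List X // l.length ≤ n}) : List X)) h

theorem restr_sect_eq {N d : ℕ} {g g' : ↥(treeAut X)} (h : restr X N g = restr X N g')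
    {v : List X} (hv : v.length + d ≤ N) :
    restr X d (sect g v) = restr X d (sect g' v) := by
  apply Equiv.ext; rintro ⟨w, hw⟩
  apply Subtype.ext
  show sectFun (g : Equiv.Perm (List X)) v w = sectFun (g' : Equiv.Perm (List X)) v w
  simp only [sectFun]
  rw [apply_eq_of_restr_eq h (by simp only [List.length_append]; omega)]

end AuxStatement9


section Branch

variable {X : Type*}

/-- The "branch" permutation: identity down to level `k`, then acts by `gf v` in the
subtree at each vertex `v` of length `k`. -/
def branchFun (k : ℕ) (gf : List X → ↥(treeAut X)) (w : List X) : List X :=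
  if w.length < k then w else w.take k ++ (gf (w.take k) : Equiv.Perm (List X)) (w.drop k)

theorem branchFun_length (k : ℕ) (gf : List X → ↥(treeAut X)) (w : List X) :
    (branchFun k gf w).length = w.length := by
  unfold branchFun; split
  · rfl
  · rw [List.length_append, treeAut.length_apply (gf _).2, List.length_take,
      List.length_drop]
    omega

theorem branchFun_inv (k : ℕ) (gf : List X → ↥(treeAut X)) (w : List X) :
    branchFun k (fun v => (gf v)⁻¹) (branchFun k gf w) = w := by
  by_cases h : w.length < k
  · unfold branchFun
    rw [if_pos h, if_pos h]
  · push_neg at h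
    have htk : (w.take k).length = k := by rw [List.length_take]; omega
    unfold branchFun
    rw [if_neg (not_lt.mpr h)]
    rw [if_neg (by
      rw [List.length_append, treeAut.length_apply (gf _).2, htk, List.length_drop]; omega)]
    rw [List.take_left' htk, List.drop_left' htk]
    simp
end Branch


section Branch2

variable {X : Type*}

def branchPerm (k : ℕ) (gf : List X → ↥(treeAut X)) : Equiv.Perm (List X) where
  toFun := branchFun k gf
  invFun := branchFun k (fun v => (gf v)⁻¹)
  left_inv w := branchFun_inv k gf w
  right_inv w := by
    have h := branchFun_inv k (fun v => (gf v)⁻¹) w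
    simpa using h

theorem branchPerm_mem (k : ℕ) (hk : 1 ≤ k) (gf : List X → ↥(treeAut X)) :
    branchPerm k gf ∈ treeAut X := by
  constructor
  · show branchFun k gf [] = []
    unfold branchFun
    rw [if_pos (by simp; omega)]
  · intro v x
    show ∃ y, branchFun k gf (v ++ [x]) = branchFun k gf v ++ [y]
    by_cases h1 : v.length + 1 < k
    · refine ⟨x, ?_⟩
      unfold branchFun
      rw [if_pos (by simp; omega), if_pos (by omega)]
    · by_cases h2 : v.length < k
      · refine ⟨x, ?_⟩
        unfold branchFun
        rw [if_neg (by simp; omega), if_pos h2]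
        have htake : (v ++ [x]).take k = v ++ [x] := List.take_of_length_le (by simp; omega)
        have hdrop : (v ++ [x]).drop k = [] := List.drop_eq_nil_of_le (by simp; omega)
        rw [htake, hdrop, (gf (v ++ [x])).2.1, List.append_nil]
      · push_neg at h2
        obtain ⟨y, hy⟩ := (gf (v.take k)).2.2 (v.drop k) x
        refine ⟨y, ?_⟩
        unfold branchFun
        rw [if_neg (by simp; omega), if_neg (by omega)]
        rw [List.take_append_of_le_length h2, List.drop_append_of_le_length h2, hy,
          ← List.append_assoc]

def branchAut (k : ℕ) (hk : 1 ≤ k) (gf : List X → ↥(treeAut X)) : ↥(treeAut X) :=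
  ⟨branchPerm k gf, branchPerm_mem k hk gf⟩

theorem branchAut_fix (k : ℕ) (hk : 1 ≤ k) (gf : List X → ↥(treeAut X)) (c : ℕ)
    (hfix : ∀ v u, u.length ≤ c → (gf v : Equiv.Perm (List X)) u = u)
    {w : List X} (hw : w.length ≤ k + c) :
    (branchAut k hk gf : Equiv.Perm (List X)) w = w := by
  show branchFun k gf w = w
  unfold branchFun
  split
  · rfl
  · next h =>
      push_neg at h
      rw [hfix _ _ (by rw [List.length_drop]; omega), List.take_append_drop]

theorem sect_branchAut_of_ge (k : ℕ) (hk : 1 ≤ k) (gf : List X → ↥(treeAut X))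
    {w : List X} (hw : k ≤ w.length) :
    sect (branchAut k hk gf) w = sect (gf (w.take k)) (w.drop k) := by
  apply Subtype.ext; apply Equiv.ext; intro u
  rw [sect_apply, sect_apply]
  show (branchFun k gf (w ++ u)).drop w.length
      = ((gf (w.take k) : Equiv.Perm (List X)) (w.drop k ++ u)).drop (w.drop k).length
  unfold branchFun
  rw [if_neg (by simp; omega), List.take_append_of_le_length hw,
    List.drop_append_of_le_length hw]
  have htk : (w.take k).length = k := by rw [List.length_take]; omega
  have hlen : w.length = (w.take k).length + (w.drop k).length := by
    rw [htk, List.length_drop]; omega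
  rw [hlen, List.drop_append, List.drop_eq_nil_of_le (by omega), Nat.add_sub_cancel_left,
    List.nil_append]

theorem sect_branchAut_fix_of_lt (k : ℕ) (hk : 1 ≤ k) (gf : List X → ↥(treeAut X)) (c : ℕ)
    (hfix : ∀ v u, u.length ≤ c → (gf v : Equiv.Perm (List X)) u = u)
    {w : List X} (hw : w.length < k) {u : List X} (hu : u.length + w.length ≤ k + c) :
    (sect (branchAut k hk gf) w : Equiv.Perm (List X)) u = u := by
  rw [sect_apply]
  show ((branchAut k hk gf : Equiv.Perm (List X)) (w ++ u)).drop w.length = u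
  rw [branchAut_fix k hk gf c hfix (by simp; omega), List.drop_left]

end Branch2


section Trunc

variable {X : Type*}

theorem map_restr_len {N : ℕ} {H : Subgroup ↥(treeAut X)} {a : Pat X N}
    (ha : a ∈ Subgroup.map (restr X N) H) (w : {l : List X // l.length ≤ N}) :
    ((a w : {l : List X // l.length ≤ N}) : List X).length = (w : List X).length := by
  obtain ⟨g, _, rfl⟩ := ha
  exact treeAut.length_apply g.2 w

/-- The truncation homomorphism from the restriction at level `N` to level `n ≤ N`. -/
def truncHom (H : Subgroup ↥(treeAut X)) (N n : ℕ) (hn : n ≤ N) :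
    ↥(Subgroup.map (restr X N) H) →* Pat X n where
  toFun a :=
    { toFun := fun w => ⟨((a : Pat X N) ⟨w.1, w.2.trans hn⟩ : {l : List X // l.length ≤ N}),
        by rw [map_restr_len a.2]; exact w.2⟩
      invFun := fun w => ⟨(((a⁻¹ : ↥(Subgroup.map (restr X N) H)) : Pat X N)
          ⟨w.1, w.2.trans hn⟩ : {l : List X // l.length ≤ N}),
        by rw [map_restr_len (a⁻¹).2]; exact w.2⟩
      left_inv := fun w => by
        apply Subtype.ext
        show (((a : Pat X N)⁻¹) ((a : Pat X N) ⟨w.1, w.2.trans hn⟩) : List X) = w.1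
        rw [Equiv.Perm.coe_inv, Equiv.symm_apply_apply]
      right_inv := fun w => by
        apply Subtype.ext
        show ((a : Pat X N) (((a : Pat X N)⁻¹) ⟨w.1, w.2.trans hn⟩) : List X) = w.1
        rw [Equiv.Perm.coe_inv, Equiv.apply_symm_apply] }
  map_one' := by apply Equiv.ext; intro w; apply Subtype.ext; rfl
  map_mul' a b := by apply Equiv.ext; intro w; apply Subtype.ext; rfl

theorem truncHom_eq (H : Subgroup ↥(treeAut X)) (N n : ℕ) (hn : n ≤ N)
    (a : ↥(Subgroup.map (restr X N) H)) {g : ↥(treeAut X)}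
    (hg : restr X N g = (a : Pat X N)) : truncHom H N n hn a = restr X n g := by
  apply Equiv.ext; intro w; apply Subtype.ext
  show ((a : Pat X N) ⟨w.1, w.2.trans hn⟩ : List X) = (g : Equiv.Perm (List X)) w.1
  rw [← hg]; rfl

theorem truncHom_range (H : Subgroup ↥(treeAut X)) (N n : ℕ) (hn : n ≤ N) :
    (truncHom H N n hn).range = Subgroup.map (restr X n) H := by
  ext b
  constructor
  · rintro ⟨a, rfl⟩
    obtain ⟨g, hg, hga⟩ := a.2
    rw [truncHom_eq H N n hn a hga]
    exact ⟨g, hg, rfl⟩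
  · rintro ⟨g, hg, rfl⟩
    exact ⟨⟨restr X N g, ⟨g, hg, rfl⟩⟩, truncHom_eq H N n hn _ rfl⟩

end Trunc


section KerCard

theorem ker_card {X : Type*} [Fintype X] (d : ℕ) (hd : 1 ≤ d) (P : Subgroup (Pat X d))
    (hmin : P = Subgroup.map (restr X d) (GP X d P)) (n : ℕ) (hn : d ≤ n) :
    Nat.card ↥(truncHom (GP X d P) (n+1) n (Nat.le_succ n)).ker
      = Nat.card ↥(P ⊓ patLevelStab X d (d-1)) ^ Fintype.card X ^ (n+1-d) := by
  classical
  set G := GP X d P with hG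
  set k := n + 1 - d with hkdef
  have hk1 : 1 ≤ k := by omega
  have hkd : k + d = n + 1 := by omega
  set T := truncHom G (n+1) n (Nat.le_succ n) with hT
  have hwit : ∀ a : ↥T.ker, ∃ g : ↥(treeAut X), g ∈ G ∧
      restr X (n+1) g = ((a : ↥(Subgroup.map (restr X (n+1)) G)) : Pat X (n+1)) :=
    fun a => Subgroup.mem_map.mp (a : ↥(Subgroup.map (restr X (n+1)) G)).2
  choose gw hgw1 hgw2 using hwit
  have hfix : ∀ (a : ↥T.ker) (w : List X), w.length ≤ n →
      (gw a : Equiv.Perm (List X)) w = w := by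
    intro a w hw
    have h1 : T (a : ↥(Subgroup.map (restr X (n+1)) G)) = 1 := a.2
    rw [truncHom_eq G (n+1) n (Nat.le_succ n) _ (hgw2 a)] at h1
    exact congrArg (fun e => ((e ⟨w, hw⟩ : {l : List X // l.length ≤ n}) : List X)) h1
  have hmem : ∀ (a : ↥T.ker) (v : {l : List X // l.length = k}),
      restr X d (sect (gw a) v.1) ∈ P ⊓ patLevelStab X d (d-1) := by
    intro a v
    refine Subgroup.mem_inf.mpr ⟨hgw1 a v.1, ?_⟩
    intro w hw hwd
    apply Subtype.ext
    show ((gw a : Equiv.Perm (List X)) (v.1 ++ w)).drop v.1.length = w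
    rw [hfix a (v.1 ++ w) (by rw [List.length_append, v.2]; omega), List.drop_left]
  set S := P ⊓ patLevelStab X d (d-1) with hS
  set F : ↥T.ker → ({l : List X // l.length = k} → ↥S) :=
    fun a v => ⟨restr X d (sect (gw a) v.1), hmem a v⟩ with hF
  have hinj : Function.Injective F := by
    intro a a' h
    apply Subtype.ext; apply Subtype.ext
    rw [← hgw2 a, ← hgw2 a']
    apply Equiv.ext; rintro ⟨w, hw⟩
    apply Subtype.ext
    show (gw a : Equiv.Perm (List X)) w = (gw a' : Equiv.Perm (List X)) w
    by_cases hwn : w.length ≤ n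
    · rw [hfix a w hwn, hfix a' w hwn]
    · have hw1 : w.length = n + 1 := by omega
      have htk : (w.take k).length = k := by rw [List.length_take]; omega
      have hdk : (w.drop k).length = d := by rw [List.length_drop]; omega
      have hvs := congrFun h ⟨w.take k, htk⟩
      have hvs' : restr X d (sect (gw a) (w.take k)) = restr X d (sect (gw a') (w.take k)) :=
        congrArg Subtype.val hvs
      have hsect := congrArg
        (fun e => ((e ⟨w.drop k, hdk.le⟩ : {l : List X // l.length ≤ d}) : List X)) hvs'
      conv_lhs => rw [← List.take_append_drop k w]
      conv_rhs => rw [← List.take_append_drop k w]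
      rw [treeAut.apply_append (gw a).2, treeAut.apply_append (gw a').2]
      rw [hfix a _ (by omega), hfix a' _ (by omega)]
      exact congrArg (fun t => w.take k ++ t) hsect
  have hsurj : Function.Surjective F := by
    intro c
    have hc : ∀ v : {l : List X // l.length = k}, ∃ g : ↥(treeAut X), g ∈ G ∧
        restr X d g = ((c v : ↥S) : Pat X d) := by
      intro v
      have h1 := (Subgroup.mem_inf.mp (c v).2).1
      rw [hmin] at h1
      exact Subgroup.mem_map.mp h1
    choose gv hgv1 hgv2 using hc
    set gf : List X → ↥(treeAut X) :=
      fun v => if hv : v.length = k then gv ⟨v, hv⟩ else 1 with hgf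
    have hgffix : ∀ v u, u.length ≤ d - 1 → (gf v : Equiv.Perm (List X)) u = u := by
      intro v u hu
      by_cases hv : v.length = k
      · simp only [hgf]; rw [dif_pos hv]
        have h1 := (Subgroup.mem_inf.mp (c ⟨v, hv⟩).2).2 u (le_trans hu (Nat.sub_le d 1)) hu
        have h2 := congrArg Subtype.val h1
        rw [← hgv2 ⟨v, hv⟩] at h2
        exact h2
      · simp only [hgf]; rw [dif_neg hv]; rfl
    have hgfG : ∀ v, gf v ∈ G := by
      intro v
      by_cases hv : v.length = k
      · simp only [hgf]; rw [dif_pos hv]; exact hgv1 _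
      · simp only [hgf]; rw [dif_neg hv]; exact one_mem G
    set b := branchAut k hk1 gf with hb
    have hbG : b ∈ G := by
      intro v
      by_cases hv : k ≤ v.length
      · rw [hb, sect_branchAut_of_ge k hk1 gf hv]
        exact hgfG (v.take k) (v.drop k)
      · push_neg at hv
        have h1 : restr X d (sect b v) = 1 := by
          apply Equiv.ext; rintro ⟨u, hu⟩; apply Subtype.ext
          show (sect b v : Equiv.Perm (List X)) u = u
          exact sect_branchAut_fix_of_lt k hk1 gf (d-1) hgffix hv (by omega)
        rw [h1]; exact one_mem P
    have hbH : restr X (n+1) b ∈ Subgroup.map (restr X (n+1)) G := ⟨b, hbG, rfl⟩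
    have hbker : (⟨restr X (n+1) b, hbH⟩ : ↥(Subgroup.map (restr X (n+1)) G)) ∈ T.ker := by
      have h1 : T ⟨restr X (n+1) b, hbH⟩ = 1 := by
        rw [hT, truncHom_eq G (n+1) n (Nat.le_succ n) _ rfl]
        apply Equiv.ext; rintro ⟨w, hw⟩; apply Subtype.ext
        show (b : Equiv.Perm (List X)) w = w
        exact branchAut_fix k hk1 gf (d-1) hgffix (by omega)
      exact h1
    refine ⟨⟨⟨restr X (n+1) b, hbH⟩, hbker⟩, ?_⟩
    funext v
    apply Subtype.ext
    show restr X d (sect (gw ⟨⟨restr X (n+1) b, hbH⟩, hbker⟩) v.1) = ((c v : ↥S) : Pat X d)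
    have hv' : v.1.length + d ≤ n + 1 := by rw [v.2]; omega
    rw [restr_sect_eq (hgw2 ⟨⟨restr X (n+1) b, hbH⟩, hbker⟩) hv']
    rw [hb, sect_branchAut_of_ge k hk1 gf (le_of_eq v.2.symm)]
    rw [List.take_of_length_le (le_of_eq v.2), List.drop_eq_nil_of_le (le_of_eq v.2),
      sect_nil]
    simp only [hgf]; rw [dif_pos v.2, hgv2]
  rw [Nat.card_congr (Equiv.ofBijective F ⟨hinj, hsurj⟩), Nat.card_fun]
  congr 1
  letI : Fintype {l : List X // l.length = k} := inferInstanceAs (Fintype (List.Vector X k))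
  rw [Nat.card_eq_fintype_card]
  exact card_vector k

end KerCard


section Steps

theorem step_card {X : Type*} [Fintype X] (d : ℕ) (hd : 1 ≤ d) (P : Subgroup (Pat X d))
    (hmin : P = Subgroup.map (restr X d) (GP X d P)) (n : ℕ) (hn : d ≤ n) :
    Nat.card ↥(Subgroup.map (restr X (n+1)) (GP X d P))
      = Nat.card ↥(Subgroup.map (restr X n) (GP X d P))
          * Nat.card ↥(P ⊓ patLevelStab X d (d-1)) ^ Fintype.card X ^ (n+1-d) := by
  set G := GP X d P with hG
  set T := truncHom G (n+1) n (Nat.le_succ n) with hT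
  have h1 : Nat.card ↥(Subgroup.map (restr X (n+1)) G)
      = Nat.card ↥T.range * Nat.card ↥T.ker := by
    rw [Subgroup.card_eq_card_quotient_mul_card_subgroup T.ker,
      Nat.card_congr (QuotientGroup.quotientKerEquivRange T).toEquiv]
  rw [h1, truncHom_range G (n+1) n (Nat.le_succ n), ker_card d hd P hmin n hn]

theorem levels_card {X : Type*} [Fintype X] (d : ℕ) (hd : 1 ≤ d) (P : Subgroup (Pat X d))
    (hmin : P = Subgroup.map (restr X d) (GP X d P)) (j : ℕ) :
    Nat.card ↥(Subgroup.map (restr X (d+j)) (GP X d P))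
      = Nat.card ↥P * Nat.card ↥(P ⊓ patLevelStab X d (d-1))
          ^ (∑ i ∈ Finset.Icc 1 j, Fintype.card X ^ i) := by
  induction j with
  | zero =>
      rw [Nat.add_zero, ← hmin]
      rw [show Finset.Icc 1 0 = ∅ from Finset.Icc_eq_empty (by omega)]
      simp
  | succ j ih =>
      have hstep := step_card d hd P hmin (d+j) (Nat.le_add_right d j)
      rw [show d + (j+1) = (d+j)+1 from by omega, hstep, ih,
        show (d+j)+1-d = j+1 from by omega,
        Finset.sum_Icc_succ_top (by omega : 1 ≤ j+1)]
      ring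

end Steps


/-- for a minimal pattern group `P` of depth `d` with `m = |St_P(d-1)|` and
`n > d`, the restriction of `G_P` to `X^[n]` has order `|P| · m^(|X| + |X|² + ⋯ + |X|^(n-d))`. -/
theorem statement9 {X : Type*} [Fintype X] [Nontrivial X] (d : ℕ) (hd : 1 ≤ d)
    (P : Subgroup (Pat X d)) (hP : P ≤ finAut X d)
    (hmin : P = Subgroup.map (restr X d) (GP X d P)) (n : ℕ) (hn : d < n) :
    Nat.card ↥(Subgroup.map (restr X n) (GP X d P))
      = Nat.card ↥P * (Nat.card ↥(P ⊓ patLevelStab X d (d - 1)))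
          ^ (∑ i ∈ Finset.Icc 1 (n - d), (Fintype.card X) ^ i) := by
  have key := levels_card d hd P hmin (n - d)
  rw [show d + (n - d) = n from by omega] at key
  exact key
end

section
/- If P is an abelian pattern group of depth d, then the self-similar group of finite type G_P is topologically finitely generated if and only if it is finite. -/
open List

section Statement18Aux

/-! ### Auxiliary material for statement18 -/

instance listLenLeFinite {X : Type*} [Finite X] (n : ℕ) :
    Finite {l : List X // l.length ≤ n} :=
  (List.finite_length_le X n).to_subtype

noncomputable instance listLenEqFintype {X : Type*} [Finite X] (n : ℕ) :
    Fintype {l : List X // l.length = n} :=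
  @Fintype.ofFinite _ ((List.finite_length_eq X n).to_subtype)

theorem restr_apply {X : Type*} (d : ℕ) (g : ↥(treeAut X)) (u : List X) (hu : u.length ≤ d) :
    ((restr X d g ⟨u, hu⟩ : {l : List X // l.length ≤ d}) : List X)
      = (g : Equiv.Perm (List X)) u := rfl

theorem sect_mem_GP {X : Type*} [Fintype X] {d : ℕ} {P : Subgroup (Pat X d)}
    {g : ↥(treeAut X)} (hg : g ∈ GP X d P) (v : List X) : sect g v ∈ GP X d P := by
  intro w
  rw [← sect_append]
  exact hg (v ++ w)

open Classical in
/-- Graft: act by `s` on the subtree rooted at `c`, identity elsewhere. -/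
noncomputable def graftPerm {X : Type*} (c : List X) (s : Equiv.Perm (List X)) :
    Equiv.Perm (List X) where
  toFun w := if c <+: w then c ++ s (w.drop c.length) else w
  invFun w := if c <+: w then c ++ s⁻¹ (w.drop c.length) else w
  left_inv w := by
    by_cases h : c <+: w
    · obtain ⟨t, rfl⟩ := h
      simp
    · simp [h]
  right_inv w := by
    by_cases h : c <+: w
    · obtain ⟨t, rfl⟩ := h
      simp
    · simp [h]

theorem graftPerm_apply_prefix {X : Type*} (c t : List X) (s : Equiv.Perm (List X)) :
    graftPerm c s (c ++ t) = c ++ s t := by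
  simp [graftPerm]

theorem graftPerm_apply_of_not_prefix {X : Type*} {c w : List X} (s : Equiv.Perm (List X))
    (h : ¬ c <+: w) : graftPerm c s w = w := by
  simp [graftPerm, h]

theorem graftPerm_mem_treeAut {X : Type*} (c : List X) (s : Equiv.Perm (List X))
    (hs : s ∈ treeAut X) : graftPerm c s ∈ treeAut X := by
  refine ⟨?_, ?_⟩
  · by_cases h : c <+: ([] : List X)
    · obtain rfl : c = [] := List.prefix_nil.mp h
      have h2 : graftPerm ([] : List X) s ([] ++ ([] : List X)) = [] ++ s [] :=
        graftPerm_apply_prefix _ _ _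
      simpa [hs.1] using h2
    · exact graftPerm_apply_of_not_prefix s h
  · intro v x
    by_cases h1 : c <+: v
    · obtain ⟨t, rfl⟩ := h1
      obtain ⟨y, hy⟩ := hs.2 t x
      refine ⟨y, ?_⟩
      have e1 : (c ++ t) ++ [x] = c ++ (t ++ [x]) := by simp
      rw [e1, graftPerm_apply_prefix, graftPerm_apply_prefix, hy, List.append_assoc]
    · by_cases h2 : c <+: v ++ [x]
      · have hlen : v.length < c.length := by
          by_contra hle
          push_neg at hle
          exact h1 (List.prefix_of_prefix_length_le h2 (List.prefix_append v [x]) hle)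
      
        have hceq : c = v ++ [x] := h2.eq_of_length (by
          have h3 := h2.length_le
          simp only [List.length_append, List.length_singleton] at h3 ⊢
          omega)
        refine ⟨x, ?_⟩
        rw [graftPerm_apply_of_not_prefix s h1]
        have h4 : graftPerm c s (v ++ [x]) = c ++ s ((v ++ [x]).drop c.length) := by
          simp [graftPerm, h2]
        rw [h4, hceq]
        simp [hs.1]
      · exact ⟨x, by rw [graftPerm_apply_of_not_prefix s h2,
          graftPerm_apply_of_not_prefix s h1]⟩

noncomputable def graftAut {X : Type*} (c : List X) (s : ↥(treeAut X)) : ↥(treeAut X) :=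
  ⟨graftPerm c (s : Equiv.Perm (List X)), graftPerm_mem_treeAut c _ s.2⟩

theorem graftPerm_fix_strict_prefix {X : Type*} {k : ℕ} {s : Equiv.Perm (List X)}
    (hs : ∀ z : List X, z.length ≤ k → s z = z) {w c : List X} (hwc : w <+: c) (hne : w ≠ c)
    {u : List X} (hu : u.length ≤ k + 1) : graftPerm c s (w ++ u) = w ++ u := by
  by_cases h : c <+: w ++ u
  · obtain ⟨c', rfl⟩ := hwc
    obtain ⟨t, ht⟩ := h
    have hc' : c' ≠ [] := by rintro rfl; simp at hne
    rw [List.append_assoc] at ht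
    have hu' : u = c' ++ t := List.append_cancel_left ht.symm
    have hc'len : 1 ≤ c'.length := by
      cases c' with
      | nil => exact absurd rfl hc'
      | cons a l => simp
    have hts : s t = t := hs t (by
      have h5 : u.length = c'.length + t.length := by rw [hu']; simp
      omega)
    calc graftPerm (w ++ c') s (w ++ u)
        = graftPerm (w ++ c') s ((w ++ c') ++ t) := by rw [hu', ← List.append_assoc]
      _ = (w ++ c') ++ s t := graftPerm_apply_prefix _ _ _
      _ = w ++ u := by rw [hts, hu', List.append_assoc]
  · exact graftPerm_apply_of_not_prefix s h

theorem graftPerm_fix_incomp {X : Type*} (s : Equiv.Perm (List X)) {c w : List X}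
    (h1 : ¬ c <+: w) (h2 : ¬ w <+: c) (u : List X) : graftPerm c s (w ++ u) = w ++ u := by
  apply graftPerm_apply_of_not_prefix
  intro h
  rcases Nat.le_total c.length w.length with hle | hle
  · exact h1 (List.prefix_of_prefix_length_le h (List.prefix_append w u) hle)
  · exact h2 (List.prefix_of_prefix_length_le (List.prefix_append w u) h hle)

end Statement18Aux
section Statement18Aux2

theorem restr_sect_eq_one {X : Type*} {d : ℕ} {g : ↥(treeAut X)} {v : List X}
    (H : ∀ u : List X, u.length ≤ d → (g : Equiv.Perm (List X)) (v ++ u) = v ++ u) :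
    restr X d (sect g v) = 1 := by
  apply Equiv.ext
  rintro ⟨u, hu⟩
  apply Subtype.ext
  rw [restr_apply, sect_apply]
  show sectFun (g : Equiv.Perm (List X)) v u = u
  simp [sectFun, H u hu]

theorem restr_sect_graftAut_of_short {X : Type*} {d : ℕ} (hd : 1 ≤ d) {s : ↥(treeAut X)}
    (hfix : ∀ z : List X, z.length ≤ d - 1 → (s : Equiv.Perm (List X)) z = z)
    {c w : List X} (hw : w.length < c.length) :
    restr X d (sect (graftAut c s) w) = 1 := by
  by_cases h2 : w <+: c
  · have hne : w ≠ c := fun h => by rw [h] at hw; exact lt_irrefl _ hw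
    exact restr_sect_eq_one (fun u hu =>
      graftPerm_fix_strict_prefix hfix h2 hne (by omega))
  · have h1 : ¬ c <+: w := fun h => absurd h.length_le (by omega)
    exact restr_sect_eq_one (fun u hu => graftPerm_fix_incomp _ h1 h2 u)

theorem restr_sect_graftAut_ne_same_length {X : Type*} {d : ℕ} (s : ↥(treeAut X))
    {c w : List X} (hlen : w.length = c.length) (hne : w ≠ c) :
    restr X d (sect (graftAut c s) w) = 1 := by
  have h1 : ¬ c <+: w := fun h => hne (h.eq_of_length (by omega)).symm
  have h2 : ¬ w <+: c := fun h => hne (h.eq_of_length hlen)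
  exact restr_sect_eq_one (fun u hu => graftPerm_fix_incomp _ h1 h2 u)

theorem restr_sect_graftAut_self {X : Type*} {d : ℕ} (c : List X) (s : ↥(treeAut X)) :
    restr X d (sect (graftAut c s) c) = restr X d s := by
  apply Equiv.ext
  rintro ⟨u, hu⟩
  apply Subtype.ext
  rw [restr_apply, restr_apply, sect_apply]
  show sectFun (graftPerm c (s : Equiv.Perm (List X))) c u = (s : Equiv.Perm (List X)) u
  simp [sectFun, graftPerm_apply_prefix]

theorem restr_sect_graftAut_deep {X : Type*} {d : ℕ} (c w' : List X) (s : ↥(treeAut X)) :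
    restr X d (sect (graftAut c s) (c ++ w')) = restr X d (sect s w') := by
  apply Equiv.ext
  rintro ⟨u, hu⟩
  apply Subtype.ext
  rw [restr_apply, restr_apply, sect_apply, sect_apply]
  show sectFun (graftPerm c (s : Equiv.Perm (List X))) (c ++ w') u
      = sectFun (s : Equiv.Perm (List X)) w' u
  simp only [sectFun]
  rw [List.append_assoc, graftPerm_apply_prefix, List.length_append,
    ← List.drop_drop, List.drop_left]

theorem graftAut_mem_GP {X : Type*} [Fintype X] {d : ℕ} (hd : 1 ≤ d) {P : Subgroup (Pat X d)}
    {s : ↥(treeAut X)} (hs : s ∈ GP X d P)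
    (hfix : ∀ z : List X, z.length ≤ d - 1 → (s : Equiv.Perm (List X)) z = z)
    (c : List X) : graftAut c s ∈ GP X d P := by
  intro w
  by_cases h1 : c <+: w
  · obtain ⟨w', rfl⟩ := h1
    rw [restr_sect_graftAut_deep]
    exact hs w'
  · by_cases h2 : w <+: c
    · have hne : w ≠ c := by rintro rfl; exact h1 List.prefix_rfl
      rw [restr_sect_eq_one (fun u hu =>
        graftPerm_fix_strict_prefix hfix h2 hne (by omega))]
      exact P.one_mem
    · rw [restr_sect_eq_one (fun u hu => graftPerm_fix_incomp _ h1 h2 u)]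
      exact P.one_mem

end Statement18Aux2
section Statement18Phi

/-- The commutative group structure on an abelian pattern group. -/
@[reducible]
noncomputable def commGroupP {X : Type*} [Fintype X] {d : ℕ} (P : Subgroup (Pat X d))
    (hab : ∀ a ∈ P, ∀ b ∈ P, a * b = b * a) : CommGroup ↥P :=
  { (inferInstance : Group ↥P) with
    mul_comm := fun a b => Subtype.ext (hab a.1 a.2 b.1 b.2) }

/-- The level-`m` total pattern homomorphism `G_P → P`. -/
noncomputable def phiH {X : Type*} [Fintype X] {d : ℕ} (P : Subgroup (Pat X d))
    (hab : ∀ a ∈ P, ∀ b ∈ P, a * b = b * a) (m : ℕ) (g : ↥(GP X d P)) : ↥P :=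
  letI := commGroupP P hab
  ∏ w : {l : List X // l.length = m},
    (⟨restr X d (sect g.1 w.1), (mem_GP g.1).mp g.2 w.1⟩ : ↥P)

theorem phiH_mul {X : Type*} [Fintype X] {d : ℕ} (P : Subgroup (Pat X d))
    (hab : ∀ a ∈ P, ∀ b ∈ P, a * b = b * a) (m : ℕ) (g h : ↥(GP X d P)) :
    phiH P hab m (g * h) = phiH P hab m g * phiH P hab m h := by
  letI := commGroupP P hab
  unfold phiH
  have key : ∀ w : {l : List X // l.length = m},
      (⟨restr X d (sect (g * h).1 w.1), (mem_GP (g * h).1).mp (g * h).2 w.1⟩ : ↥P)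
      = (⟨restr X d (sect g.1 ((h.1 : Equiv.Perm (List X)) w.1)),
            (mem_GP g.1).mp g.2 _⟩ : ↥P)
        * ⟨restr X d (sect h.1 w.1), (mem_GP h.1).mp h.2 w.1⟩ := by
    intro w
    apply Subtype.ext
    show restr X d (sect ((g * h).1) w.1) = _
    rw [show (g * h).1 = g.1 * h.1 from rfl, sect_mul, map_mul]
    rfl
  rw [Finset.prod_congr rfl (fun w _ => key w), Finset.prod_mul_distrib]
  congr 1
  let e : {l : List X // l.length = m} ≃ {l : List X // l.length = m} :=
  { toFun := fun w => ⟨(h.1 : Equiv.Perm (List X)) w.1,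
      by rw [treeAut.length_apply h.1.2]; exact w.2⟩
    invFun := fun w => ⟨((h.1 : Equiv.Perm (List X)))⁻¹ w.1,
      by rw [treeAut.length_apply ((treeAut X).inv_mem h.1.2)]; exact w.2⟩
    left_inv := fun w => Subtype.ext (by simp)
    right_inv := fun w => Subtype.ext (by simp) }
  exact Equiv.prod_comp e
    (fun w => (⟨restr X d (sect g.1 w.1), (mem_GP g.1).mp g.2 w.1⟩ : ↥P))

theorem phiH_one {X : Type*} [Fintype X] {d : ℕ} (P : Subgroup (Pat X d))
    (hab : ∀ a ∈ P, ∀ b ∈ P, a * b = b * a) (m : ℕ) :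
    phiH P hab m 1 = 1 := by
  letI := commGroupP P hab
  unfold phiH
  have key : ∀ w : {l : List X // l.length = m},
      (⟨restr X d (sect (1 : ↥(GP X d P)).1 w.1),
        (mem_GP (1 : ↥(GP X d P)).1).mp (1 : ↥(GP X d P)).2 w.1⟩ : ↥P) = 1 := by
    intro w
    apply Subtype.ext
    show restr X d (sect (1 : ↥(GP X d P)).1 w.1) = 1
    rw [show (1 : ↥(GP X d P)).1 = 1 from rfl, sect_one, map_one]
  rw [Finset.prod_congr rfl (fun w _ => key w), Finset.prod_const_one]

theorem phiH_inv {X : Type*} [Fintype X] {d : ℕ} (P : Subgroup (Pat X d))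
    (hab : ∀ a ∈ P, ∀ b ∈ P, a * b = b * a) (m : ℕ) (g : ↥(GP X d P)) :
    phiH P hab m g⁻¹ = (phiH P hab m g)⁻¹ := by
  have h1 := phiH_mul P hab m g⁻¹ g
  rw [inv_mul_cancel, phiH_one] at h1
  exact eq_inv_of_mul_eq_one_left h1.symm

theorem phiH_congr {X : Type*} [Fintype X] {d : ℕ} (P : Subgroup (Pat X d))
    (hab : ∀ a ∈ P, ∀ b ∈ P, a * b = b * a) (m : ℕ) (g h : ↥(GP X d P))
    (H : ∀ w : List X, w.length ≤ m + d →
      (g.1 : Equiv.Perm (List X)) w = (h.1 : Equiv.Perm (List X)) w) :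
    phiH P hab m g = phiH P hab m h := by
  letI := commGroupP P hab
  unfold phiH
  apply Finset.prod_congr rfl
  intro w _
  apply Subtype.ext
  show restr X d (sect g.1 w.1) = restr X d (sect h.1 w.1)
  apply Equiv.ext
  rintro ⟨u, hu⟩
  apply Subtype.ext
  rw [restr_apply, restr_apply, sect_apply, sect_apply]
  simp only [sectFun]
  rw [H (w.1 ++ u) (by rw [List.length_append, w.2]; omega)]

theorem phiH_graft_lt {X : Type*} [Fintype X] {d : ℕ} (P : Subgroup (Pat X d))
    (hab : ∀ a ∈ P, ∀ b ∈ P, a * b = b * a) (hd : 1 ≤ d) {s : ↥(treeAut X)}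
    (hs : s ∈ GP X d P)
    (hfix : ∀ z : List X, z.length ≤ d - 1 → (s : Equiv.Perm (List X)) z = z)
    (c : List X) {m : ℕ} (hm : m < c.length) :
    phiH P hab m ⟨graftAut c s, graftAut_mem_GP hd hs hfix c⟩ = 1 := by
  letI := commGroupP P hab
  unfold phiH
  apply Finset.prod_eq_one
  intro w _
  apply Subtype.ext
  show restr X d (sect (graftAut c s) w.1) = 1
  exact restr_sect_graftAut_of_short hd hfix (by rw [w.2]; exact hm)

theorem phiH_graft_self {X : Type*} [Fintype X] {d : ℕ} (P : Subgroup (Pat X d))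
    (hab : ∀ a ∈ P, ∀ b ∈ P, a * b = b * a) (hd : 1 ≤ d) {s : ↥(treeAut X)}
    (hs : s ∈ GP X d P)
    (hfix : ∀ z : List X, z.length ≤ d - 1 → (s : Equiv.Perm (List X)) z = z)
    (c : List X) (hsP : restr X d s ∈ P) :
    phiH P hab c.length ⟨graftAut c s, graftAut_mem_GP hd hs hfix c⟩
      = ⟨restr X d s, hsP⟩ := by
  letI := commGroupP P hab
  unfold phiH
  rw [Finset.prod_eq_single (⟨c, rfl⟩ : {l : List X // l.length = c.length})]
  · apply Subtype.ext
    show restr X d (sect (graftAut c s) c) = restr X d s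
    exact restr_sect_graftAut_self c s
  · intro w _ hw
    apply Subtype.ext
    show restr X d (sect (graftAut c s) w.1) = 1
    exact restr_sect_graftAut_ne_same_length s w.2 (fun h => hw (Subtype.ext h))
  · intro h
    exact absurd (Finset.mem_univ _) h

end Statement18Phi
set_option maxHeartbeats 2000000 in
/-- for an abelian pattern group `P`, the group `G_P` is topologically
finitely generated iff it is finite. -/
theorem statement18 {X : Type*} [Fintype X] [Nontrivial X] (d : ℕ) (hd : 1 ≤ d)
    (P : Subgroup (Pat X d)) (hP : P ≤ finAut X d)
    (hab : ∀ a ∈ P, ∀ b ∈ P, a * b = b * a) :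
    TopFG (GP X d P) ↔ Finite ↥(GP X d P) := by
  classical
  constructor
  · -- hard direction
    intro hTop
    by_contra hInf
    rw [not_finite_iff_infinite] at hInf
    obtain ⟨S, hSsub, happrox⟩ := hTop
    -- Step 1: a nontrivial element fixing all words of length ≤ d - 1
    obtain ⟨g1, g2, hne, heq⟩ := Finite.exists_ne_map_eq_of_infinite
      (fun g : ↥(GP X d P) => restr X (d - 1) g.1)
    have hg0ne : g1 * g2⁻¹ ≠ (1 : ↥(GP X d P)) := by
      intro h
      exact hne (mul_inv_eq_one.mp h)
    set g0 : ↥(GP X d P) := g1 * g2⁻¹ with hg0def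
    have hrestr0 : restr X (d - 1) g0.1 = 1 := by
      have h1 : g0.1 = g1.1 * g2.1⁻¹ := rfl
      rw [h1, map_mul, map_inv, heq, mul_inv_cancel]
    have hfix0 : ∀ w : List X, w.length ≤ d - 1 →
        (g0.1 : Equiv.Perm (List X)) w = w := by
      intro w hw
      have h1 : ((restr X (d - 1) g0.1) ⟨w, hw⟩ : {l : List X // l.length ≤ d - 1})
          = ⟨w, hw⟩ := by rw [hrestr0]; rfl
      have h2 := congrArg Subtype.val h1
      rwa [restr_apply] at h2
    -- Step 2: minimal moved word
    have hmove : ∃ w : List X, (g0.1 : Equiv.Perm (List X)) w ≠ w := by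
      by_contra hall
      push_neg at hall
      exact hg0ne (Subtype.ext (Subtype.ext (Equiv.ext hall)))
    have hQ : ∃ n, ∃ w : List X, w.length = n ∧ (g0.1 : Equiv.Perm (List X)) w ≠ w :=
      ⟨hmove.choose.length, hmove.choose, rfl, hmove.choose_spec⟩
    set M := Nat.find hQ with hMdef
    obtain ⟨wst, hwlen, hwmove⟩ := Nat.find_spec hQ
    have hfixlt : ∀ w : List X, w.length < M → (g0.1 : Equiv.Perm (List X)) w = w := by
      intro w hw
      by_contra hmm
      have hw2 : ∃ w2 : List X, w2.length = w.length ∧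
          (g0.1 : Equiv.Perm (List X)) w2 ≠ w2 := ⟨w, rfl, hmm⟩
      have h3 : M ≤ w.length := Nat.find_le hw2
      omega
    have hdM : d ≤ M := by
      by_contra hlt
      push_neg at hlt
      exact hwmove (hfix0 wst (by omega))
    -- Step 3: the section with nontrivial root pattern
    set v0 := wst.take (M - d) with hv0def
    set u0 := wst.drop (M - d) with hu0def
    have hv0len : v0.length = M - d := by
      rw [hv0def, List.length_take, hwlen]; omega
    have hu0len : u0.length = d := by
      rw [hu0def, List.length_drop, hwlen]; omega
    set sA : ↥(treeAut X) := sect g0.1 v0 with hsAdef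
    have hsGP : sA ∈ GP X d P := sect_mem_GP g0.2 v0
    have hsfix : ∀ z : List X, z.length ≤ d - 1 →
        (sA : Equiv.Perm (List X)) z = z := by
      intro z hz
      rw [hsAdef, sect_apply]
      simp only [sectFun]
      rw [hfixlt (v0 ++ z) (by rw [List.length_append, hv0len]; omega), List.drop_left]
    have hgv0 : (g0.1 : Equiv.Perm (List X)) v0 = v0 :=
      hfixlt v0 (by rw [hv0len]; omega)
    have hsmove : (sA : Equiv.Perm (List X)) u0 ≠ u0 := by
      intro hEq
      apply hwmove
      have h1 := treeAut.apply_append g0.1.2 v0 u0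
      rw [hgv0] at h1
      have h2 : sectFun (g0.1 : Equiv.Perm (List X)) v0 u0 = u0 := by
        rw [← sect_apply]; exact hEq
      rw [h2] at h1
      rwa [List.take_append_drop] at h1
    set p : Pat X d := restr X d sA with hpdef
    have hpP : p ∈ P := by
      have h1 := hsGP []
      rwa [sect_nil] at h1
    have hp1 : p ≠ 1 := by
      intro h
      apply hsmove
      have h1 : ((p ⟨u0, le_of_eq hu0len⟩ : {l : List X // l.length ≤ d}) : List X)
          = u0 := by rw [h]; rfl
      rwa [hpdef, restr_apply] at h1
    -- Step 4: counting setup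
    haveI : Finite ↥P := inferInstance
    letI : Fintype ↥P := Fintype.ofFinite _
    set c0 := Fintype.card ↥P with hc0def
    have hc2 : 2 ≤ c0 :=
      Fintype.one_lt_card_iff_nontrivial.mpr
        ⟨⟨⟨p, hpP⟩, 1, fun h => hp1 (by simpa [Subtype.ext_iff] using h)⟩⟩
    letI := commGroupP P hab
    set ι := {x // x ∈ S} with hιdef
    set Nn := Nat.card (ι → Fin c0) with hNndef
    obtain ⟨x0, -⟩ := exists_pair_ne X
    set rep : ℕ → List X := fun n => List.replicate n x0 with hrepdef
    have hreplen : ∀ n, (rep n).length = n := fun n => List.length_replicate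
    set tA : ℕ → ↥(treeAut X) := fun n => graftAut (rep n) sA with htAdef
    have htGP : ∀ n, tA n ∈ GP X d P := fun n => graftAut_mem_GP hd hsGP hsfix (rep n)
    set tG : ℕ → ↥(GP X d P) := fun n => ⟨tA n, htGP n⟩ with htGdef
    set Ψ : ↥(GP X d P) → (Fin (Nn + 1) → ↥P) :=
      fun g i => phiH P hab (i : ℕ) g with hΨdef
    have hΨmul : ∀ g h : ↥(GP X d P), Ψ (g * h) = Ψ g * Ψ h := by
      intro g h; funext i; exact phiH_mul P hab _ g h
    have hΨone : Ψ 1 = 1 := by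
      funext i; exact phiH_one P hab _
    have hΨinv : ∀ g : ↥(GP X d P), Ψ g⁻¹ = (Ψ g)⁻¹ := by
      intro g; funext i; exact phiH_inv P hab _ g
    set q : ι → (Fin (Nn + 1) → ↥P) := fun s => Ψ ⟨s.1, hSsub s.2⟩ with hqdef
    have hq1 : ∀ s : ι, q s ^ c0 = 1 := by
      intro s
      funext i
      show (q s i) ^ c0 = 1
      exact pow_card_eq_one
    set e : (ι → Fin c0) → (Fin (Nn + 1) → ↥P) :=
      fun a => ∏ s : ι, q s ^ ((a s : ℕ)) with hedef
    have he_mul : ∀ a b, e a * e b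
        = e (fun s => ⟨((a s : ℕ) + (b s : ℕ)) % c0, Nat.mod_lt _ (by omega)⟩) := by
      intro a b
      rw [hedef]
      simp only
      rw [← Finset.prod_mul_distrib]
      apply Finset.prod_congr rfl
      intro s _
      rw [← pow_add]
      exact pow_eq_pow_mod _ (hq1 s)
    have he_zero : e (fun _ => ⟨0, by omega⟩) = 1 := by
      rw [hedef]
      simp only [pow_zero]
      exact Finset.prod_const_one
    have hrange_one : (1 : Fin (Nn + 1) → ↥P) ∈ Set.range e := ⟨_, he_zero⟩
    have hrange_mul : ∀ y z : Fin (Nn + 1) → ↥P,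
        y ∈ Set.range e → z ∈ Set.range e → y * z ∈ Set.range e := by
      rintro y z ⟨a, rfl⟩ ⟨b, rfl⟩
      exact ⟨_, (he_mul a b).symm⟩
    have hrange_inv : ∀ y : Fin (Nn + 1) → ↥P, y ∈ Set.range e → y⁻¹ ∈ Set.range e := by
      rintro y ⟨a, rfl⟩
      refine ⟨fun s => ⟨(c0 - (a s : ℕ)) % c0, Nat.mod_lt _ (by omega)⟩, ?_⟩
      have h := he_mul a (fun s => ⟨(c0 - (a s : ℕ)) % c0, Nat.mod_lt _ (by omega)⟩)
      have h2 : (fun s => (⟨((a s : ℕ) + ((c0 - (a s : ℕ)) % c0)) % c0,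
          Nat.mod_lt _ (by omega)⟩ : Fin c0)) = (fun _ => (⟨0, by omega⟩ : Fin c0)) := by
        funext s
        apply Fin.ext
        show ((a s : ℕ) + ((c0 - (a s : ℕ)) % c0)) % c0 = 0
        have h3 : (a s : ℕ) ≤ c0 := le_of_lt (a s).2
        rw [Nat.add_mod_mod, Nat.add_sub_cancel' h3, Nat.mod_self]
      rw [h2, he_zero] at h
      exact (inv_eq_of_mul_eq_one_right h).symm
    have hgen : ∀ s : ι, q s ∈ Set.range e := by
      intro s
      refine ⟨fun t => if t = s then ⟨1 % c0, Nat.mod_lt _ (by omega)⟩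
        else ⟨0, by omega⟩, ?_⟩
      rw [hedef]
      simp only
      rw [Finset.prod_eq_single s]
      · simp [Nat.mod_eq_of_lt (show (1 : ℕ) < c0 by omega)]
      · intro t _ hts
        simp [hts]
      · intro h
        exact absurd (Finset.mem_univ s) h
    have hSclos : Subgroup.closure (S : Set ↥(treeAut X)) ≤ GP X d P :=
      (Subgroup.closure_le _).mpr hSsub
    have hclos_range : ∀ x (hx : x ∈ Subgroup.closure (S : Set ↥(treeAut X))),
        Ψ ⟨x, hSclos hx⟩ ∈ Set.range e := by
      intro x hx
      refine Subgroup.closure_induction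
        (p := fun y hy => Ψ ⟨y, hSclos hy⟩ ∈ Set.range e) ?_ ?_ ?_ ?_ hx
      · intro y hy
        exact hgen ⟨y, hy⟩
      · show Ψ (1 : ↥(GP X d P)) ∈ Set.range e
        rw [hΨone]
        exact hrange_one
      · intro y z hy hz hy' hz'
        show Ψ ((⟨y, hSclos hy⟩ : ↥(GP X d P)) * ⟨z, hSclos hz⟩) ∈ Set.range e
        rw [hΨmul]
        exact hrange_mul _ _ hy' hz'
      · intro y hy hy'
        show Ψ ((⟨y, hSclos hy⟩ : ↥(GP X d P))⁻¹) ∈ Set.range e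
        rw [hΨinv]
        exact hrange_inv _ hy'
    -- Step 5: Ψ of the grafted elements lies in the range of e
    have htrange : ∀ n : ℕ, Ψ (tG n) ∈ Set.range e := by
      intro n
      obtain ⟨h, hhcl, hagree⟩ := happrox (tA n) (htGP n) (Nn + d)
      have h1 : Ψ (tG n) = Ψ ⟨h, hSclos hhcl⟩ := by
        funext i
        refine (phiH_congr P hab (i : ℕ) ⟨h, hSclos hhcl⟩ (tG n) ?_).symm
        intro w hw
        exact hagree w (by have := i.2; omega)
      rw [h1]
      exact hclos_range h hhcl
    -- Step 6: injectivity
    have hkey : ∀ a b : ℕ, a < b → a ≤ Nn → Ψ (tG a) ≠ Ψ (tG b) := by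
      intro a b hab' haN hEq
      have h1 := congrFun hEq (⟨a, by omega⟩ : Fin (Nn + 1))
      have h2 : phiH P hab a (tG a) = ⟨p, hpP⟩ := by
        have h3 := phiH_graft_self P hab hd hsGP hsfix (rep a) hpP
        rw [hreplen a] at h3
        exact h3
      have h4 : phiH P hab a (tG b) = 1 := by
        have h5 := phiH_graft_lt P hab hd hsGP hsfix (rep b)
          (m := a) (by rw [hreplen b]; exact hab')
        exact h5
      have h6 : (⟨p, hpP⟩ : ↥P) = 1 := by
        rw [← h2, ← h4]
        exact h1
      exact hp1 (by simpa [Subtype.ext_iff] using h6)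
    haveI : Finite ↥(Set.range e) := (Set.finite_range e).to_subtype
    set F : Fin (Nn + 1) → ↥(Set.range e) :=
      fun n => ⟨Ψ (tG (n : ℕ)), htrange _⟩ with hFdef
    have hFinj : Function.Injective F := by
      intro a b hEq
      have h := Subtype.ext_iff.mp hEq
      simp only [hFdef] at h
      rcases lt_trichotomy (a : ℕ) (b : ℕ) with hlt | heq2 | hgt
      · exact absurd h (hkey _ _ hlt (by have := a.2; omega))
      · exact Fin.ext heq2
      · exact absurd h.symm (hkey _ _ hgt (by have := b.2; omega))
    have hcard1 : Nn + 1 ≤ Nat.card ↥(Set.range e) := by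
      have h1 := Nat.card_le_card_of_injective F hFinj
      simpa using h1
    have hcard2 : Nat.card ↥(Set.range e) ≤ Nn := Finite.card_range_le e
    omega
  · -- easy direction
    intro hFin
    haveI : Finite ↥((GP X d P : Set ↥(treeAut X))) := hFin
    refine ⟨(Set.toFinite (GP X d P : Set ↥(treeAut X))).toFinset, ?_, ?_⟩
    · intro x hx
      simpa using hx
    · intro g hg n
      refine ⟨g, Subgroup.subset_closure ?_, fun w _ => rfl⟩
      simp only [Finset.mem_coe, Set.Finite.mem_toFinset]
      exact hg
end
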